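/- There exists d₁ ∈ ℕ such that for all integers d ≥ d₁ and k ≥ 2, the condition number of the Bethe tree satisfies n/2 ≤ χ(B_{d,k}) ≤ 2n, where n = (d^k − 1)/(d − 1) is the number of vertices of B_{d,k}. -/

import Mathlib

open Matrix

attribute [local instance] Classical.propDecidable

/-- `G` is (isomorphic to) the Bethe tree `B_{d,k}`: a rooted tree of depth `k` in which
the root has degree `d`, the vertices at levels `2` through `k−1` (i.e. at distance
`1 ≤ j ≤ k−2` from the root) have degree `d+1`, and the vertices at level `k` (distance
`k−1` from the root) are leaves. -/
def IsBetheTree (d k : ℕ) {V : Type*} [Fintype V] (G : SimpleGraph V) : Prop :=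
  G.IsTree ∧ ∃ r : V,
    (∀ v : V, G.dist r v ≤ k - 1) ∧
    G.degree r = d ∧
    (∀ v : V, 0 < G.dist r v → G.dist r v < k - 1 → G.degree v = d + 1) ∧
    (∀ v : V, G.dist r v = k - 1 → G.degree v = 1)

/-- `lam` is the largest eigenvalue of the symmetric positive semidefinite matrix `M`,
characterized through the Rayleigh quotient. -/
def IsMaxEigenvalue {V : Type*} [Fintype V] (M : Matrix V V ℝ) (lam : ℝ) : Prop :=
  (∀ v : V → ℝ, v ⬝ᵥ (M *ᵥ v) ≤ lam * (v ⬝ᵥ v)) ∧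
  ∃ v : V → ℝ, v ⬝ᵥ v = 1 ∧ v ⬝ᵥ (M *ᵥ v) = lam

/-- `lam` is the smallest nonzero eigenvalue of the Laplacian matrix `M` of a connected
graph (whose kernel consists of the constant vectors), characterized through the Rayleigh
quotient on the orthogonal complement `{v : ∑ᵢ vᵢ = 0}` of the kernel. -/
def IsMinPosEigenvalue {V : Type*} [Fintype V] (M : Matrix V V ℝ) (lam : ℝ) : Prop :=
  (∀ v : V → ℝ, (∑ i, v i) = 0 → lam * (v ⬝ᵥ v) ≤ v ⬝ᵥ (M *ᵥ v)) ∧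
  ∃ v : V → ℝ, (∑ i, v i) = 0 ∧ v ⬝ᵥ v = 1 ∧ v ⬝ᵥ (M *ᵥ v) = lam


open SimpleGraph Finset

set_option linter.unusedSectionVars false
set_option linter.unusedVariables false
set_option linter.unreachableTactic false
set_option linter.unusedTactic false
set_option maxHeartbeats 1000000

section Aux

variable {V : Type} [Fintype V] {G : SimpleGraph V}

/-- In a tree, adjacent vertices have different distances to any base vertex. -/
lemma tree_adj_dist_ne (hT : G.IsTree) (w : V) {u v : V} (h : G.Adj u v) :
    G.dist w u ≠ G.dist w v := by
  intro heq
  have hc : G.Connected := hT.isConnected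
  obtain ⟨Pu, hPu, hPul⟩ := hc.exists_path_of_dist w u
  obtain ⟨Pv, hPv, hPvl⟩ := hc.exists_path_of_dist w v
  have hvns : v ∉ Pu.support := by
    intro hv
    have h1 := Pu.take_spec hv
    have h2 : (Pu.takeUntil v hv).length + (Pu.dropUntil v hv).length = Pu.length := by
      rw [← Walk.length_append, h1]
    have h3 : G.dist w v ≤ (Pu.takeUntil v hv).length := SimpleGraph.dist_le _
    have h4 : G.dist v u ≤ (Pu.dropUntil v hv).length := SimpleGraph.dist_le _
    have h5 : 0 < G.dist v u := hc.pos_dist_of_ne h.ne'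
    omega
  have hQ : (Pu.concat h).IsPath := by
    rw [← Walk.isPath_reverse_iff, Walk.reverse_concat]
    refine Walk.IsPath.cons (by simpa using hPu) ?_
    simpa using hvns
  have := hT.existsUnique_path w v
  have heqwalk : Pu.concat h = Pv := this.unique hQ hPv
  have : (Pu.concat h).length = Pv.length := by rw [heqwalk]
  rw [Walk.length_concat, hPul, hPvl] at this
  omega

/-- In a tree, adjacent vertices have distances to a base differing by one. -/
lemma tree_adj_dist (hT : G.IsTree) (w : V) {u v : V} (h : G.Adj u v) :
    G.dist w v = G.dist w u + 1 ∨ G.dist w u = G.dist w v + 1 := by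
  have h1 : G.dist u v = 1 := SimpleGraph.dist_eq_one_iff_adj.2 h
  have h2 : G.dist w v ≤ G.dist w u + G.dist u v := hT.isConnected.dist_triangle
  have h3 : G.dist w u ≤ G.dist w v + G.dist v u := hT.isConnected.dist_triangle
  have h4 : G.dist v u = 1 := SimpleGraph.dist_eq_one_iff_adj.2 h.symm
  have h5 := tree_adj_dist_ne hT w h
  omega

/-- Existence of a parent: a neighbour strictly closer to the base. -/
lemma tree_exists_parent (hT : G.IsTree) {w i : V} (h : 0 < G.dist w i) :
    ∃ p, G.Adj p i ∧ G.dist w p + 1 = G.dist w i := by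
  have hc : G.Connected := hT.isConnected
  obtain ⟨P, hP, hPl⟩ := hc.exists_path_of_dist w i
  have hne : i ≠ w := by
    intro hh; subst hh; simp [SimpleGraph.dist_self] at h
  obtain ⟨p, hadj, q, hq⟩ := Walk.exists_eq_cons_of_ne hne P.reverse
  refine ⟨p, hadj.symm, ?_⟩
  have hlen : q.length + 1 = G.dist w i := by
    have := congr_arg Walk.length hq
    simpa [Walk.length_reverse, hPl] using this.symm
  have h1 : G.dist w p ≤ q.length := by
    have := SimpleGraph.dist_le q.reverse
    simpa [Walk.length_reverse, SimpleGraph.dist_comm] using this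
  have h2 : G.dist w i ≤ G.dist w p + 1 := by
    have h3 : G.dist p i = 1 := SimpleGraph.dist_eq_one_iff_adj.2 hadj.symm
    have := hc.dist_triangle (u := w) (v := p) (w := i)
    omega
  omega

/-- Uniqueness of the parent. -/
lemma tree_parent_unique (hT : G.IsTree) {w i p₁ p₂ : V}
    (h₁ : G.Adj p₁ i ∧ G.dist w p₁ + 1 = G.dist w i)
    (h₂ : G.Adj p₂ i ∧ G.dist w p₂ + 1 = G.dist w i) : p₁ = p₂ := by
  have hc : G.Connected := hT.isConnected
  obtain ⟨ha₁, hd₁⟩ := h₁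
  obtain ⟨ha₂, hd₂⟩ := h₂
  obtain ⟨P₁, hP₁, hP₁l⟩ := hc.exists_path_of_dist w p₁
  obtain ⟨P₂, hP₂, hP₂l⟩ := hc.exists_path_of_dist w p₂
  have hkey : ∀ (p : V) (ha : G.Adj p i) (hd : G.dist w p + 1 = G.dist w i)
      (P : G.Walk w p) (hP : P.IsPath) (hPl : P.length = G.dist w p),
      i ∉ P.support := by
    intro p ha hd P hP hPl hi
    have h3 : G.dist w i ≤ (P.takeUntil i hi).length := SimpleGraph.dist_le _
    have h4 := Walk.length_takeUntil_le P hi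
    omega
  have hQ₁ : (P₁.concat ha₁).IsPath := by
    rw [← Walk.isPath_reverse_iff, Walk.reverse_concat]
    exact Walk.IsPath.cons (by simpa using hP₁)
      (by simpa using hkey p₁ ha₁ hd₁ P₁ hP₁ hP₁l)
  have hQ₂ : (P₂.concat ha₂).IsPath := by
    rw [← Walk.isPath_reverse_iff, Walk.reverse_concat]
    exact Walk.IsPath.cons (by simpa using hP₂)
      (by simpa using hkey p₂ ha₂ hd₂ P₂ hP₂ hP₂l)
  have huniq := hT.existsUnique_path w i
  have heq : P₁.concat ha₁ = P₂.concat ha₂ := (huniq.unique hQ₁ hQ₂)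
  have := congr_arg (fun W : G.Walk w i => W.reverse.getVert 1) heq
  simpa [Walk.reverse_concat, Walk.getVert_cons] using this

/-- Parity of distances along a walk. -/
lemma tree_walk_parity (hT : G.IsTree) (w : V) {u v : V} (W : G.Walk u v) :
    (G.dist w u + W.length) % 2 = G.dist w v % 2 := by
  induction W with
  | nil => simp
  | cons h W ih =>
    rename_i a b c
    have := tree_adj_dist hT w h
    simp only [Walk.length_cons] at *
    omega

variable (G) in
/-- The children of `u` with respect to a root `r`. -/
noncomputable def childs (r u : V) : Finset V :=
  univ.filter (fun c => G.Adj u c ∧ G.dist r c = G.dist r u + 1)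

variable (G) in
/-- The level set at distance `l` from `r`. -/
noncomputable def lev (r : V) (l : ℕ) : Finset V :=
  univ.filter (fun v => G.dist r v = l)

lemma mem_childs {r u c : V} :
    c ∈ childs G r u ↔ G.Adj u c ∧ G.dist r c = G.dist r u + 1 := by
  simp [childs]

lemma mem_lev {r v : V} {l : ℕ} : v ∈ lev G r l ↔ G.dist r v = l := by simp [lev]

section WithPar

variable {r : V} {par : V → V}
  (hT : G.IsTree)
  (hpar : ∀ i, i ≠ r → G.Adj (par i) i ∧ G.dist r (par i) + 1 = G.dist r i)

include hT hpar

lemma ne_root_of_dist_pos {i : V} (h : 0 < G.dist r i) : i ≠ r := by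
  intro hh; subst hh; simp [SimpleGraph.dist_self] at h

lemma par_eq {i p : V} (hi : i ≠ r) (hadj : G.Adj p i)
    (hd : G.dist r p + 1 = G.dist r i) : par i = p :=
  tree_parent_unique hT (hpar i hi) ⟨hadj, hd⟩

lemma childs_eq_fiber (u : V) :
    (univ.erase r).filter (fun c => par c = u) = childs G r u := by
  ext c
  simp only [Finset.mem_filter, Finset.mem_erase, Finset.mem_univ, true_and, and_true,
    mem_childs]
  constructor
  · rintro ⟨hc, hpc⟩
    obtain ⟨ha, hd⟩ := hpar c hc
    rw [hpc] at ha hd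
    exact ⟨ha, hd.symm⟩
  · rintro ⟨ha, hd⟩
    have hc : c ≠ r := ne_root_of_dist_pos hT hpar (by omega)
    exact ⟨hc, par_eq hT hpar hc ha hd.symm⟩

lemma childs_root : childs G r r = G.neighborFinset r := by
  ext c
  simp only [mem_childs, SimpleGraph.mem_neighborFinset, SimpleGraph.dist_self]
  constructor
  · rintro ⟨h, _⟩; exact h
  · intro h
    exact ⟨h, SimpleGraph.dist_eq_one_iff_adj.2 h⟩

lemma neighborFinset_ne_root {u : V} (hu : u ≠ r) :
    G.neighborFinset u = insert (par u) (childs G r u) := by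
  obtain ⟨hpa, hpd⟩ := hpar u hu
  ext j
  simp only [SimpleGraph.mem_neighborFinset, Finset.mem_insert, mem_childs]
  constructor
  · intro hadj
    rcases tree_adj_dist hT r hadj with h | h
    · exact Or.inr ⟨hadj, h⟩
    · left
      exact (tree_parent_unique hT (hpar u hu) ⟨hadj.symm, h.symm⟩).symm
  · rintro (rfl | ⟨h, _⟩)
    · exact hpa.symm
    · exact h

lemma par_not_mem_childs {u : V} (hu : u ≠ r) : par u ∉ childs G r u := by
  obtain ⟨hpa, hpd⟩ := hpar u hu
  simp only [mem_childs]
  rintro ⟨-, hd⟩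
  omega

lemma card_childs_ne_root {u : V} (hu : u ≠ r) :
    (childs G r u).card + 1 = G.degree u := by
  rw [← SimpleGraph.card_neighborFinset_eq_degree, neighborFinset_ne_root hT hpar hu,
    Finset.card_insert_of_notMem (par_not_mem_childs hT hpar hu)]

lemma card_childs_root : (childs G r r).card = G.degree r := by
  rw [childs_root hT hpar, SimpleGraph.card_neighborFinset_eq_degree]

lemma par_maps_lev {l : ℕ} {i : V} (hi : i ∈ lev G r (l + 1)) : par i ∈ lev G r l := by
  rw [mem_lev] at *
  have hir : i ≠ r := ne_root_of_dist_pos hT hpar (by omega)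
  have := (hpar i hir).2
  omega

lemma lev_filter_par {l : ℕ} {u : V} (hu : u ∈ lev G r l) :
    (lev G r (l + 1)).filter (fun c => par c = u) = childs G r u := by
  rw [mem_lev] at hu
  ext c
  simp only [Finset.mem_filter, mem_lev, mem_childs]
  constructor
  · rintro ⟨hc, hpc⟩
    have hcr : c ≠ r := ne_root_of_dist_pos hT hpar (by omega)
    obtain ⟨ha, hd⟩ := hpar c hcr
    rw [hpc] at ha hd
    exact ⟨ha, by omega⟩
  · rintro ⟨ha, hd⟩
    have hcr : c ≠ r := ne_root_of_dist_pos hT hpar (by omega)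
    exact ⟨by omega, par_eq hT hpar hcr ha (by omega)⟩

end WithPar

variable (G) in
noncomputable def tlev (r x : V) (t : ℕ) : Finset V :=
  univ.filter (fun i => G.dist r i = t + 1 ∧ G.dist x i = t)

lemma mem_tlev {r x i : V} {t : ℕ} :
    i ∈ tlev G r x t ↔ G.dist r i = t + 1 ∧ G.dist x i = t := by simp [tlev]






section Bethe

variable {r : V} {par : V → V} {d K : ℕ}
  (hT : G.IsTree)
  (hpar : ∀ i, i ≠ r → G.Adj (par i) i ∧ G.dist r (par i) + 1 = G.dist r i)
  (hd : 100 ≤ d) (hK : 1 ≤ K)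
  (hdist : ∀ v, G.dist r v ≤ K)
  (hdegr : G.degree r = d)
  (hdegi : ∀ v, 0 < G.dist r v → G.dist r v < K → G.degree v = d + 1)
  (hdegl : ∀ v, G.dist r v = K → G.degree v = 1)

include hT hpar hd hK hdist hdegr hdegi hdegl

lemma dist_pos_of_ne_root {u : V} (hu : u ≠ r) : 0 < G.dist r u :=
  hT.isConnected.pos_dist_of_ne (Ne.symm hu)

lemma card_childs_le (u : V) : (childs G r u).card ≤ d := by
  by_cases hu : u = r
  · subst hu; rw [card_childs_root hT hpar, hdegr]
  · have h1 := card_childs_ne_root hT hpar hu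
    have h2 : 0 < G.dist r u := dist_pos_of_ne_root hT hpar hd hK hdist hdegr hdegi hdegl hu
    rcases lt_or_eq_of_le (hdist u) with h | h
    · have := hdegi u h2 h; omega
    · have := hdegl u h; omega

lemma card_childs_eq {u : V} (hu : G.dist r u < K) : (childs G r u).card = d := by
  by_cases h : u = r
  · subst h; rw [card_childs_root hT hpar, hdegr]
  · have h1 := card_childs_ne_root hT hpar h
    have h2 : 0 < G.dist r u := dist_pos_of_ne_root hT hpar hd hK hdist hdegr hdegi hdegl h
    have := hdegi u h2 hu; omega

lemma lev_zero : lev G r 0 = {r} := by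
  ext v
  rw [mem_lev, Finset.mem_singleton]
  rw [hT.isConnected.dist_eq_zero_iff]
  exact comm

lemma card_lev : ∀ l, l ≤ K → (lev G r l).card = d ^ l := by
  intro l
  induction l with
  | zero => intro _; rw [lev_zero hT hpar hd hK hdist hdegr hdegi hdegl]; simp
  | succ l ih =>
    intro hl
    have hmaps : ∀ i ∈ lev G r (l + 1), par i ∈ lev G r l := by
      intro i hi
      rw [mem_lev] at *
      have hir : i ≠ r := ne_root_of_dist_pos hT hpar (by omega)
      have := (hpar i hir).2
      omega
    rw [Finset.card_eq_sum_card_fiberwise hmaps]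
    have : ∀ u ∈ lev G r l, ((lev G r (l+1)).filter (fun c => par c = u)).card = d := by
      intro u hu
      rw [lev_filter_par hT hpar hu]
      exact card_childs_eq hT hpar hd hK hdist hdegr hdegi hdegl
        (by rw [mem_lev] at hu; omega)
    rw [Finset.sum_congr rfl this, Finset.sum_const, ih (by omega), smul_eq_mul]
    ring

lemma card_V_eq : Fintype.card V = ∑ l ∈ Finset.range (K + 1), d ^ l := by
  classical
  rw [← Finset.card_univ]
  have hmaps : ∀ i ∈ (univ : Finset V), G.dist r i ∈ Finset.range (K + 1) := by
    intro i _; rw [Finset.mem_range]; have := hdist i; omega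
  rw [Finset.card_eq_sum_card_fiberwise hmaps]
  refine Finset.sum_congr rfl fun l hl => ?_
  have : (univ.filter (fun i => G.dist r i = l)) = lev G r l := rfl
  rw [this, card_lev hT hpar hd hK hdist hdegr hdegi hdegl l
    (by rw [Finset.mem_range] at hl; omega)]

-- now the subtree of a fixed child x of r
variable {x : V} (hx : G.Adj r x)
include hx

lemma dist_rx : G.dist r x = 1 := SimpleGraph.dist_eq_one_iff_adj.2 hx

lemma parity_x (i : V) :
    G.dist x i + 1 = G.dist r i ∨ G.dist r i + 1 = G.dist x i := by
  obtain ⟨W, hW, hWl⟩ := hT.isConnected.exists_path_of_dist x i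
  have hpar2 := tree_walk_parity hT r W
  rw [hWl] at hpar2
  have h1 : G.dist r x = 1 := dist_rx hT hpar hd hK hdist hdegr hdegi hdegl hx
  have h2 : G.dist r i ≤ G.dist r x + G.dist x i := hT.isConnected.dist_triangle
  have h3 : G.dist x i ≤ G.dist x r + G.dist r i := hT.isConnected.dist_triangle
  have h4 : G.dist x r = 1 := by rw [SimpleGraph.dist_comm]; exact h1
  omega

lemma par_x {i : V} {t : ℕ} (h1 : G.dist r i = t + 2) (h2 : G.dist x i = t + 1) :
    G.dist x (par i) = t ∧ G.dist r (par i) = t + 1 := by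
  obtain ⟨q, hqa, hqd⟩ := tree_exists_parent hT (w := x) (i := i) (by omega)
  have hq2 : G.dist x q = t := by omega
  have hq3 : G.dist r q = t + 1 := by
    have ha := parity_x hT hpar hd hK hdist hdegr hdegi hdegl hx q
    have hb := tree_adj_dist hT r hqa
    omega
  have : par i = q := par_eq hT hpar
    (ne_root_of_dist_pos hT hpar (by omega)) hqa (by omega)
  rw [this]; exact ⟨hq2, hq3⟩

lemma tlev_zero : tlev G r x 0 = {x} := by
  ext i
  rw [mem_tlev, Finset.mem_singleton]
  constructor
  · rintro ⟨-, h2⟩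
    exact (hT.isConnected.dist_eq_zero_iff.1 h2).symm
  · rintro rfl
    exact ⟨by simpa using dist_rx hT hpar hd hK hdist hdegr hdegi hdegl hx,
      by simp⟩

lemma card_tlev : ∀ t, t < K → (tlev G r x t).card = d ^ t := by
  intro t
  induction t with
  | zero =>
    intro _; rw [tlev_zero hT hpar hd hK hdist hdegr hdegi hdegl hx]; simp
  | succ t ih =>
    intro ht
    have hmaps : ∀ i ∈ tlev G r x (t + 1), par i ∈ tlev G r x t := by
      intro i hi
      rw [mem_tlev] at *
      obtain ⟨h1, h2⟩ := hi
      have := par_x hT hpar hd hK hdist hdegr hdegi hdegl hx h1 h2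
      exact ⟨this.2, this.1⟩
    rw [Finset.card_eq_sum_card_fiberwise hmaps]
    have hfib : ∀ u ∈ tlev G r x t,
        ((tlev G r x (t+1)).filter (fun c => par c = u)) = childs G r u := by
      intro u hu
      rw [mem_tlev] at hu
      obtain ⟨hu1, hu2⟩ := hu
      ext c
      simp only [Finset.mem_filter, mem_tlev, mem_childs]
      constructor
      · rintro ⟨⟨h1, h2⟩, hpc⟩
        have hcr : c ≠ r := ne_root_of_dist_pos hT hpar (by omega)
        obtain ⟨ha, hdd⟩ := hpar c hcr
        rw [hpc] at ha hdd
        exact ⟨ha, by omega⟩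
      · rintro ⟨ha, hdd⟩
        have hc1 : G.dist r c = t + 2 := by omega
        have hcr : c ≠ r := ne_root_of_dist_pos hT hpar (by omega)
        have hxc : G.dist x c = t + 1 := by
          have h5 := parity_x hT hpar hd hK hdist hdegr hdegi hdegl hx c
          have h6 := tree_adj_dist hT x ha
          omega
        exact ⟨⟨hc1, hxc⟩, par_eq hT hpar hcr ha (by omega)⟩
    rw [Finset.sum_congr rfl (fun u hu => by rw [hfib u hu])]
    have hcc : ∀ u ∈ tlev G r x t, (childs G r u).card = d := by
      intro u hu
      rw [mem_tlev] at hu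
      exact card_childs_eq hT hpar hd hK hdist hdegr hdegi hdegl (by omega)
    rw [Finset.sum_congr rfl hcc, Finset.sum_const, ih (by omega), smul_eq_mul]
    ring

lemma card_T :
    (univ.filter (fun i => G.dist x i + 1 = G.dist r i)).card
      = ∑ t ∈ Finset.range K, d ^ t := by
  set T := univ.filter (fun i => G.dist x i + 1 = G.dist r i) with hT'
  have hmaps : ∀ i ∈ T, G.dist x i ∈ Finset.range K := by
    intro i hi
    rw [hT', Finset.mem_filter] at hi
    rw [Finset.mem_range]
    have := hdist i
    omega
  rw [Finset.card_eq_sum_card_fiberwise hmaps]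
  refine Finset.sum_congr rfl fun t ht => ?_
  rw [Finset.mem_range] at ht
  have : T.filter (fun i => G.dist x i = t) = tlev G r x t := by
    ext i
    simp only [hT', Finset.mem_filter, mem_tlev, Finset.mem_univ, true_and]
    omega
  rw [this, card_tlev hT hpar hd hK hdist hdegr hdegi hdegl hx t ht]

lemma crossing {u v : V} (hu : G.dist x u + 1 = G.dist r u)
    (hv : G.dist r v + 1 = G.dist x v) (hadj : G.Adj u v) : u = x ∧ v = r := by
  have h1 := tree_adj_dist hT r hadj
  have h2 := tree_adj_dist hT x hadj
  rcases Nat.eq_zero_or_pos (G.dist x u) with h0 | h0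
  · have hux : u = x := (hT.isConnected.dist_eq_zero_iff.1 h0).symm
    have h3 : G.dist x v = 1 := by omega
    have h4 : G.dist r v = 0 := by omega
    exact ⟨hux, (hT.isConnected.dist_eq_zero_iff.1 h4).symm⟩
  · exfalso
    obtain ⟨s, hs⟩ : ∃ s, G.dist x u = s + 1 := ⟨G.dist x u - 1, by omega⟩
    have hru : G.dist r u = s + 2 := by omega
    have hpx := par_x hT hpar hd hK hdist hdegr hdegi hdegl hx hru hs
    have hrv : G.dist r v = s + 1 := by omega
    have hxv : G.dist x v = s + 2 := by omega
    have : par u = v := par_eq hT hpar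
      (ne_root_of_dist_pos hT hpar (by omega)) hadj.symm (by omega)
    rw [this] at hpx
    omega

end Bethe

lemma lap_form (v : V → ℝ) :
    v ⬝ᵥ (G.lapMatrix ℝ *ᵥ v) =
      (∑ i : V, ∑ j : V, if G.Adj i j then (v i - v j)^2 else 0) / 2 := by
  rw [← Matrix.toLinearMap₂'_apply', SimpleGraph.lapMatrix_toLinearMap₂']

section Par
variable {r : V} {par : V → V}
  (hT : G.IsTree)
  (hpar : ∀ i, i ≠ r → G.Adj (par i) i ∧ G.dist r (par i) + 1 = G.dist r i)
include hT hpar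

lemma Q_eq (v : V → ℝ) :
    v ⬝ᵥ (G.lapMatrix ℝ *ᵥ v) = ∑ i ∈ univ.erase r, (v i - v (par i))^2 := by
  rw [lap_form]
  have step1 : ∀ i : V, (∑ j : V, if G.Adj i j then (v i - v j)^2 else 0)
      = ∑ j ∈ G.neighborFinset i, (v i - v j)^2 := by
    intro i
    rw [SimpleGraph.neighborFinset_eq_filter, Finset.sum_filter]
  have hswap : ∑ i : V, ∑ c ∈ childs G r i, (v i - v c)^2
      = ∑ c ∈ univ.erase r, (v (par c) - v c)^2 := by
    rw [← Finset.sum_fiberwise_of_maps_to (g := par)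
      (fun c (_ : c ∈ univ.erase r) => Finset.mem_univ (par c))
      (fun c => (v (par c) - v c)^2)]
    refine Finset.sum_congr rfl fun y _ => ?_
    rw [childs_eq_fiber hT hpar y]
    refine Finset.sum_congr rfl fun c hc => ?_
    obtain ⟨ha, hd⟩ := mem_childs.1 hc
    rw [par_eq hT hpar (ne_root_of_dist_pos hT hpar (by omega)) ha (by omega)]
  have hmain : ∑ i : V, ∑ j ∈ G.neighborFinset i, (v i - v j)^2
      = 2 * ∑ i ∈ univ.erase r, (v i - v (par i))^2 := by
    rw [← Finset.sum_erase_add univ _ (Finset.mem_univ r)]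
    have h1 : ∀ i ∈ univ.erase r, (∑ j ∈ G.neighborFinset i, (v i - v j)^2)
        = (v i - v (par i))^2 + ∑ c ∈ childs G r i, (v i - v c)^2 := by
      intro i hi
      have hir : i ≠ r := (Finset.mem_erase.1 hi).1
      rw [neighborFinset_ne_root hT hpar hir,
        Finset.sum_insert (par_not_mem_childs hT hpar hir)]
    rw [Finset.sum_congr rfl h1, Finset.sum_add_distrib]
    have h2 : ∑ j ∈ G.neighborFinset r, (v r - v j)^2
        = ∑ c ∈ childs G r r, (v r - v c)^2 := by
      rw [childs_root hT hpar]
    rw [h2, add_assoc,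
      Finset.sum_erase_add univ (fun i => ∑ c ∈ childs G r i, (v i - v c)^2)
        (Finset.mem_univ r), hswap]
    have h3 : ∑ c ∈ univ.erase r, (v (par c) - v c)^2
        = ∑ c ∈ univ.erase r, (v c - v (par c))^2 := by
      refine Finset.sum_congr rfl fun c _ => ?_
      ring
    rw [h3]; ring
  rw [Finset.sum_congr rfl (fun i _ => step1 i), hmain]
  ring

lemma sum_par_sq_le (w : V → ℝ) (hcard : ∀ u : V, ((childs G r u).card : ℝ) ≤ (d : ℝ))
    (hw : ∀ u, 0 ≤ w u) :
    ∑ i ∈ univ.erase r, w (par i) ≤ (d : ℝ) * ∑ u : V, w u := by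
  rw [← Finset.sum_fiberwise_of_maps_to (g := par)
    (fun c (_ : c ∈ univ.erase r) => Finset.mem_univ (par c)) (fun c => w (par c))]
  have h1 : ∀ y : V, ∑ c ∈ (univ.erase r).filter (fun c => par c = y), w (par c)
      = ((childs G r y).card : ℝ) * w y := by
    intro y
    have : ∀ c ∈ (univ.erase r).filter (fun c => par c = y), w (par c) = w y := by
      intro c hc
      rw [(Finset.mem_filter.1 hc).2]
    rw [Finset.sum_congr rfl this, Finset.sum_const, childs_eq_fiber hT hpar y,
      nsmul_eq_mul]
  rw [Finset.sum_congr rfl (fun y _ => h1 y), Finset.mul_sum]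
  refine Finset.sum_le_sum fun u _ => ?_
  exact mul_le_mul_of_nonneg_right (hcard u) (hw u)

lemma Q_le {d : ℕ} (hcard : ∀ u : V, ((childs G r u).card : ℝ) ≤ (d : ℝ))
    (v : V → ℝ) :
    v ⬝ᵥ (G.lapMatrix ℝ *ᵥ v) ≤ ((11 * (d:ℝ) + 110) / 10) * (v ⬝ᵥ v) := by
  have hdot : v ⬝ᵥ v = ∑ i : V, (v i)^2 := by
    simp [dotProduct, sq]
  rw [Q_eq hT hpar, hdot]
  have h1 : ∑ i ∈ univ.erase r, (v i - v (par i))^2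
      ≤ ∑ i ∈ univ.erase r, ((11:ℝ) * (v i)^2 + (11/10) * (v (par i))^2) := by
    refine Finset.sum_le_sum fun i _ => ?_
    nlinarith [sq_nonneg (10 * v i + v (par i)), sq_nonneg (v i), sq_nonneg (v (par i))]
  rw [Finset.sum_add_distrib] at h1
  have h2 : ∑ i ∈ univ.erase r, (11:ℝ) * (v i)^2 ≤ 11 * ∑ i : V, (v i)^2 := by
    rw [← Finset.mul_sum]
    refine mul_le_mul_of_nonneg_left ?_ (by norm_num)
    refine Finset.sum_le_sum_of_subset_of_nonneg (Finset.erase_subset r univ)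
      fun i _ _ => sq_nonneg _
  have h3 : ∑ i ∈ univ.erase r, (11/10:ℝ) * (v (par i))^2
      ≤ (11/10) * ((d:ℝ) * ∑ u : V, (v u)^2) := by
    rw [← Finset.mul_sum]
    refine mul_le_mul_of_nonneg_left ?_ (by norm_num)
    exact sum_par_sq_le hT hpar (fun i => (v i)^2) hcard (fun u => sq_nonneg _)
  have h4 : (0:ℝ) ≤ ∑ i : V, (v i)^2 := Finset.sum_nonneg fun i _ => sq_nonneg _
  nlinarith [h1, h2, h3, h4]

lemma lammax_ge {d : ℕ} {lam : ℝ} (hdeg : G.degree r = d)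
    (hmax : ∀ v : V → ℝ, v ⬝ᵥ (G.lapMatrix ℝ *ᵥ v) ≤ lam * (v ⬝ᵥ v))
    (hd : 1 ≤ d) : (d : ℝ) + 1 ≤ lam := by
  set t : V → ℝ := fun i => if i = r then (d:ℝ) else if G.Adj r i then -1 else 0 with ht
  have htr : t r = d := by simp [ht]
  have htn : ∀ i, G.Adj r i → t i = -1 := by
    intro i hi
    simp [ht, hi, (G.ne_of_adj hi).symm]
  have hsub : G.neighborFinset r ⊆ univ.erase r := by
    intro i hi
    rw [SimpleGraph.mem_neighborFinset] at hi
    exact Finset.mem_erase.2 ⟨(G.ne_of_adj hi).symm, Finset.mem_univ i⟩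
  have hparn : ∀ i ∈ G.neighborFinset r, par i = r := by
    intro i hi
    rw [SimpleGraph.mem_neighborFinset] at hi
    refine par_eq hT hpar (G.ne_of_adj hi).symm hi ?_
    simp [SimpleGraph.dist_eq_one_iff_adj.2 hi]
  have hQt : (d:ℝ) * ((d:ℝ)+1)^2 ≤ t ⬝ᵥ (G.lapMatrix ℝ *ᵥ t) := by
    rw [Q_eq hT hpar]
    have h5 : ∀ i ∈ G.neighborFinset r, (t i - t (par i))^2 = ((d:ℝ)+1)^2 := by
      intro i hi
      have hi' : G.Adj r i := by rwa [SimpleGraph.mem_neighborFinset] at hi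
      rw [hparn i hi, htr, htn i hi']
      ring
    calc (d:ℝ) * ((d:ℝ)+1)^2
        = ∑ i ∈ G.neighborFinset r, (t i - t (par i))^2 := by
          rw [Finset.sum_congr rfl h5, Finset.sum_const,
            SimpleGraph.card_neighborFinset_eq_degree, hdeg, nsmul_eq_mul]
      _ ≤ ∑ i ∈ univ.erase r, (t i - t (par i))^2 :=
          Finset.sum_le_sum_of_subset_of_nonneg hsub fun i _ _ => sq_nonneg _
  have hdott : t ⬝ᵥ t = (d:ℝ)^2 + d := by
    have : t ⬝ᵥ t = ∑ i : V, (t i)^2 := by simp [dotProduct, sq]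
    rw [this, ← Finset.sum_erase_add univ _ (Finset.mem_univ r), htr]
    have h6 : ∑ i ∈ univ.erase r, (t i)^2
        = ∑ i ∈ univ.erase r, (if G.Adj r i then (1:ℝ) else 0) := by
      refine Finset.sum_congr rfl fun i hi => ?_
      have hir : i ≠ r := (Finset.mem_erase.1 hi).1
      by_cases hadj : G.Adj r i <;> simp [ht, hir, hadj]
    have h7 : (univ.erase r).filter (fun i => G.Adj r i) = G.neighborFinset r := by
      ext i
      simp only [Finset.mem_filter, Finset.mem_erase, Finset.mem_univ, true_and,
        and_true, SimpleGraph.mem_neighborFinset]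
      exact ⟨fun h => h.2, fun h => ⟨(G.ne_of_adj h).symm, h⟩⟩
    rw [h6, Finset.sum_boole, h7, SimpleGraph.card_neighborFinset_eq_degree, hdeg]
    ring
  have := hmax t
  rw [hdott] at this
  have hdpos : (0:ℝ) < (d:ℝ)^2 + d := by
    have : (1:ℝ) ≤ (d:ℝ) := by exact_mod_cast hd
    nlinarith
  nlinarith [this, hQt, hdpos]

end Par

noncomputable def phiF (par : V → V) (d : ℕ) (v : V → ℝ) : ℕ → V → ℝ
  | 0 => fun _ => 0
  | (l+1) => fun i => phiF par d v l (par i) + (d:ℝ)^l * (v i - v (par i))^2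

noncomputable def rhoF (d : ℕ) (l : ℕ) : ℝ := ∑ t ∈ Finset.range l, ((1:ℝ)/d)^t




lemma phiF_nonneg (par : V → V) (d : ℕ) (v : V → ℝ) :
    ∀ l i, 0 ≤ phiF par d v l i := by
  intro l
  induction l with
  | zero => intro i; simp [phiF]
  | succ l ih =>
    intro i
    have h1 := ih (par i)
    have h2 : (0:ℝ) ≤ (d:ℝ)^l * (v i - v (par i))^2 := by positivity
    simp only [phiF]
    linarith

lemma rhoF_nonneg (d l : ℕ) : 0 ≤ rhoF d l := by
  refine Finset.sum_nonneg fun t _ => by positivity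

lemma rhoF_pos {d : ℕ} (hd : 1 ≤ d) {l : ℕ} (hl : 1 ≤ l) : 0 < rhoF d l := by
  refine Finset.sum_pos' (fun t _ => by positivity) ⟨0, ?_, by norm_num⟩
  simp [Finset.mem_range]; omega

lemma rhoF_succ (d l : ℕ) : rhoF d (l+1) = rhoF d l + ((1:ℝ)/d)^l :=
  Finset.sum_range_succ _ l

lemma rhoF_le {d : ℕ} (hd : 2 ≤ d) : ∀ l, rhoF d l ≤ (d:ℝ)/((d:ℝ)-1) := by
  have hd1 : (2:ℝ) ≤ (d:ℝ) := by exact_mod_cast hd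
  intro l
  induction l with
  | zero =>
    simp only [rhoF, Finset.range_zero, Finset.sum_empty]
    refine div_nonneg (by linarith) (by linarith)
  | succ l ih =>
    have hstep : rhoF d (l+1) = 1 + (1/(d:ℝ)) * rhoF d l := by
      rw [rhoF, Finset.sum_range_succ' (fun t => ((1:ℝ)/d)^t) l, rhoF, Finset.mul_sum]
      simp only [pow_succ, pow_zero]
      rw [add_comm]
      congr 1
      exact Finset.sum_congr rfl fun x _ => by ring
    rw [hstep]
    have h1 : (1/(d:ℝ)) * rhoF d l ≤ (1/(d:ℝ)) * ((d:ℝ)/((d:ℝ)-1)) := by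
      refine mul_le_mul_of_nonneg_left ih (by positivity)
    have h2 : 1 + (1/(d:ℝ)) * ((d:ℝ)/((d:ℝ)-1)) = (d:ℝ)/((d:ℝ)-1) := by
      have h3 : (d:ℝ) - 1 ≠ 0 := by linarith
      have h4 : (d:ℝ) ≠ 0 := by linarith
      field_simp
      ring
    linarith

section Par
variable {r : V} {par : V → V} {d : ℕ}
  (hT : G.IsTree)
  (hpar : ∀ i, i ≠ r → G.Adj (par i) i ∧ G.dist r (par i) + 1 = G.dist r i)
  (hd : 100 ≤ d)
include hT hpar hd

lemma sq_dist_le (v : V → ℝ) :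
    ∀ l (i : V), G.dist r i = l → (v i - v r)^2 ≤ rhoF d l * phiF par d v l i := by
  intro l
  induction l with
  | zero =>
    intro i hi
    have : r = i := hT.isConnected.dist_eq_zero_iff.1 hi
    subst this
    simp [rhoF, phiF]
  | succ l ih =>
    intro i hi
    have hir : i ≠ r := ne_root_of_dist_pos hT hpar (by omega)
    obtain ⟨hpa, hpd⟩ := hpar i hir
    have hp : G.dist r (par i) = l := by omega
    rcases Nat.eq_zero_or_pos l with hl | hl
    · subst hl
      have hpr : r = par i := hT.isConnected.dist_eq_zero_iff.1 hp
      have h1 : rhoF d 1 = 1 := by simp [rhoF]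
      simp only [phiF, h1, ← hpr, pow_zero]
      simp [phiF]
    · have IH := ih (par i) hp
      set a := v i - v (par i) with ha
      set b := v (par i) - v r with hb
      set s := (d:ℝ)^l * rhoF d l with hs
      have hrpos : 0 < rhoF d l := rhoF_pos (by omega) hl
      have hdpos : (0:ℝ) < (d:ℝ) := by
        have : (100:ℝ) ≤ (d:ℝ) := by exact_mod_cast hd
        linarith
      have hspos : 0 < s := by positivity
      have key : (a + b)^2 ≤ (1+s)*a^2 + (1+1/s)*b^2 := by
        have expand : (1+s)*a^2 + (1+1/s)*b^2 - (a+b)^2 = (s*a-b)^2/s := by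
          field_simp
          ring
        have hnn : (0:ℝ) ≤ (s*a-b)^2/s := by positivity
        linarith [expand]
      have h1 : 1 + s = (d:ℝ)^l * rhoF d (l+1) := by
        rw [rhoF_succ, mul_add, ← hs]
        have : ((d:ℝ))^l * ((1:ℝ)/d)^l = 1 := by
          rw [one_div, inv_pow, mul_inv_cancel₀ (by positivity)]
        rw [this]; ring
      have h2 : (1 + 1/s) * rhoF d l = rhoF d (l+1) := by
        rw [rhoF_succ, hs, _root_.one_div_pow, add_mul, one_mul, one_div (_ * _), mul_inv,
          inv_mul_cancel_right₀ (ne_of_gt hrpos), one_div]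
      have h3 : (1+1/s)*b^2 ≤ (1+1/s)*(rhoF d l * phiF par d v l (par i)) := by
        refine mul_le_mul_of_nonneg_left IH ?_
        have : 0 < 1/s := by positivity
        linarith
      have h4 : (1+1/s)*(rhoF d l * phiF par d v l (par i))
          = rhoF d (l+1) * phiF par d v l (par i) := by
        rw [← mul_assoc, h2]
      have h5 : v i - v r = a + b := by rw [ha, hb]; ring
      rw [h5]
      calc (a+b)^2 ≤ (1+s)*a^2 + (1+1/s)*b^2 := key
        _ ≤ (1+s)*a^2 + rhoF d (l+1) * phiF par d v l (par i) := by
            rw [← h4]; linarith [h3]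
        _ = rhoF d (l+1) * (phiF par d v l (par i) + (d:ℝ)^l * a^2) := by
            rw [h1]; ring
        _ = rhoF d (l+1) * phiF par d v (l+1) i := by
            simp only [phiF, ← ha]

lemma S_bound (v : V → ℝ)
    (hcard : ∀ u : V, ((childs G r u).card : ℝ) ≤ (d : ℝ)) : ∀ l,
    ∑ i ∈ lev G r (l+1), phiF par d v (l+1) i
      ≤ (d:ℝ)^l * ∑ t ∈ Finset.Icc 1 (l+1), ∑ i ∈ lev G r t, (v i - v (par i))^2 := by
  have hmaps : ∀ l, ∀ i ∈ lev G r (l + 1), par i ∈ lev G r l := by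
    intro l i hi
    rw [mem_lev] at *
    have hir : i ≠ r := ne_root_of_dist_pos hT hpar (by omega)
    have := (hpar i hir).2
    omega
  have hparsum : ∀ l, ∑ i ∈ lev G r (l+1), phiF par d v l (par i)
      ≤ (d:ℝ) * ∑ u ∈ lev G r l, phiF par d v l u := by
    intro l
    rw [← Finset.sum_fiberwise_of_maps_to (hmaps l) (fun i => phiF par d v l (par i))]
    rw [Finset.mul_sum]
    refine Finset.sum_le_sum fun u hu => ?_
    have hfib : (lev G r (l+1)).filter (fun c => par c = u) = childs G r u :=
      lev_filter_par hT hpar hu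
    have hcongr : ∀ c ∈ (lev G r (l+1)).filter (fun c => par c = u),
        phiF par d v l (par c) = phiF par d v l u := by
      intro c hc
      rw [(Finset.mem_filter.1 hc).2]
    rw [Finset.sum_congr rfl hcongr, Finset.sum_const, hfib, nsmul_eq_mul]
    exact mul_le_mul_of_nonneg_right (hcard u) (phiF_nonneg par d v l u)
  intro l
  induction l with
  | zero =>
    have : ∀ i ∈ lev G r 1, phiF par d v 1 i = (v i - v (par i))^2 := by
      intro i _
      simp [phiF]
    rw [Finset.sum_congr rfl this]
    simp
  | succ l ih =>
    have hsplit : ∑ i ∈ lev G r (l+2), phiF par d v (l+2) i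
        = ∑ i ∈ lev G r (l+2), phiF par d v (l+1) (par i)
          + (d:ℝ)^(l+1) * ∑ i ∈ lev G r (l+2), (v i - v (par i))^2 := by
      rw [Finset.mul_sum, ← Finset.sum_add_distrib]
      refine Finset.sum_congr rfl fun i _ => ?_
      simp only [phiF]
    rw [hsplit]
    have h1 := hparsum (l+1)
    have h2 : (d:ℝ) * ∑ u ∈ lev G r (l+1), phiF par d v (l+1) u
        ≤ (d:ℝ) * ((d:ℝ)^l * ∑ t ∈ Finset.Icc 1 (l+1), ∑ i ∈ lev G r t,
            (v i - v (par i))^2) := by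
      refine mul_le_mul_of_nonneg_left ih (by positivity)
    have h3 : ∑ t ∈ Finset.Icc 1 (l+2), ∑ i ∈ lev G r t, (v i - v (par i))^2
        = (∑ t ∈ Finset.Icc 1 (l+1), ∑ i ∈ lev G r t, (v i - v (par i))^2)
          + ∑ i ∈ lev G r (l+2), (v i - v (par i))^2 := by
      rw [← Finset.sum_Icc_succ_top (by omega : 1 ≤ l+2)]
    rw [h3]
    have h2' : (d:ℝ) * ((d:ℝ)^l * ∑ t ∈ Finset.Icc 1 (l+1), ∑ i ∈ lev G r t,
        (v i - v (par i))^2) = (d:ℝ)^(l+1) * ∑ t ∈ Finset.Icc 1 (l+1),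
        ∑ i ∈ lev G r t, (v i - v (par i))^2 := by ring
    linarith [h1, h2, h2']

lemma W_le (v : V → ℝ) : ∀ l,
    ∑ t ∈ Finset.Icc 1 l, ∑ i ∈ lev G r t, (v i - v (par i))^2
      ≤ ∑ i ∈ univ.erase r, (v i - v (par i))^2 := by
  intro l
  have hdisj : ((Finset.Icc 1 l : Finset ℕ) : Set ℕ).PairwiseDisjoint (lev G r ·) := by
    intro a _ b _ hab
    simp only [Function.onFun, Finset.disjoint_left]
    intro i hia hib
    rw [mem_lev] at hia hib
    omega
  rw [← Finset.sum_biUnion hdisj]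
  refine Finset.sum_le_sum_of_subset_of_nonneg ?_ (fun i _ _ => sq_nonneg _)
  intro i hi
  rw [Finset.mem_biUnion] at hi
  obtain ⟨t, ht, hit⟩ := hi
  rw [Finset.mem_Icc] at ht
  rw [mem_lev] at hit
  refine Finset.mem_erase.2 ⟨ne_root_of_dist_pos hT hpar (by omega), Finset.mem_univ i⟩

lemma poincare {K : ℕ} (hK : 1 ≤ K) (hdist : ∀ i, G.dist r i ≤ K)
    (hcard : ∀ u : V, ((childs G r u).card : ℝ) ≤ (d : ℝ))
    (v : V → ℝ) (hsum : ∑ i, v i = 0) :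
    v ⬝ᵥ v ≤ ((d:ℝ)/((d:ℝ)-1)) * ((∑ t ∈ Finset.range K, (d:ℝ)^t)
      * (v ⬝ᵥ (G.lapMatrix ℝ *ᵥ v))) := by
  have hvv : v ⬝ᵥ v = ∑ i : V, (v i)^2 := by simp [dotProduct, sq]
  have h0 : ∑ i : V, (v i - v r)^2
      = ∑ i : V, (v i)^2 + (Fintype.card V : ℝ) * (v r)^2 := by
    have hexp : ∀ i : V, (v i - v r)^2 = (v i)^2 - (2 * v r) * v i + (v r)^2 := by
      intro i; ring
    rw [Finset.sum_congr rfl fun i _ => hexp i]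
    rw [Finset.sum_add_distrib, Finset.sum_sub_distrib, ← Finset.mul_sum, hsum,
      Finset.sum_const, Finset.card_univ, nsmul_eq_mul]
    ring
  have h0' : v ⬝ᵥ v ≤ ∑ i : V, (v i - v r)^2 := by
    rw [hvv, h0]
    have : (0:ℝ) ≤ (Fintype.card V : ℝ) * (v r)^2 := by positivity
    linarith
  have hrhobar : ∀ l, rhoF d l ≤ (d:ℝ)/((d:ℝ)-1) := rhoF_le (by omega)
  have h1 : ∑ i : V, (v i - v r)^2
      ≤ ((d:ℝ)/((d:ℝ)-1)) * ∑ i : V, phiF par d v (G.dist r i) i := by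
    rw [Finset.mul_sum]
    refine Finset.sum_le_sum fun i _ => ?_
    calc (v i - v r)^2 ≤ rhoF d (G.dist r i) * phiF par d v (G.dist r i) i :=
          sq_dist_le hT hpar hd v _ i rfl
      _ ≤ ((d:ℝ)/((d:ℝ)-1)) * phiF par d v (G.dist r i) i :=
          mul_le_mul_of_nonneg_right (hrhobar _) (phiF_nonneg par d v _ i)
  have h2 : ∑ i : V, phiF par d v (G.dist r i) i
      = ∑ l ∈ Finset.range (K+1), ∑ i ∈ lev G r l, phiF par d v l i := by
    have hmapsd : ∀ i ∈ (univ : Finset V), G.dist r i ∈ Finset.range (K+1) := by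
      intro i _
      rw [Finset.mem_range]
      have := hdist i
      omega
    rw [← Finset.sum_fiberwise_of_maps_to hmapsd (fun i => phiF par d v (G.dist r i) i)]
    refine Finset.sum_congr rfl fun l _ => ?_
    refine Finset.sum_congr rfl fun i hi => ?_
    rw [(Finset.mem_filter.1 hi).2]
  have h3 : ∑ l ∈ Finset.range (K+1), ∑ i ∈ lev G r l, phiF par d v l i
      ≤ (∑ t ∈ Finset.range K, (d:ℝ)^t) * (v ⬝ᵥ (G.lapMatrix ℝ *ᵥ v)) := by
    rw [Finset.sum_range_succ' _ K]
    have hzero : ∑ i ∈ lev G r 0, phiF par d v 0 i = 0 := by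
      simp [phiF]
    rw [hzero, add_zero]
    have hQ := Q_eq hT hpar v
    have hterm : ∀ l ∈ Finset.range K,
        ∑ i ∈ lev G r (l+1), phiF par d v (l+1) i
          ≤ (d:ℝ)^l * (v ⬝ᵥ (G.lapMatrix ℝ *ᵥ v)) := by
      intro l _
      calc ∑ i ∈ lev G r (l+1), phiF par d v (l+1) i
          ≤ (d:ℝ)^l * ∑ t ∈ Finset.Icc 1 (l+1), ∑ i ∈ lev G r t,
              (v i - v (par i))^2 := S_bound hT hpar hd v hcard l
        _ ≤ (d:ℝ)^l * ∑ i ∈ univ.erase r, (v i - v (par i))^2 :=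
            mul_le_mul_of_nonneg_left (W_le hT hpar hd v (l+1)) (by positivity)
        _ = (d:ℝ)^l * (v ⬝ᵥ (G.lapMatrix ℝ *ᵥ v)) := by rw [hQ]
    calc ∑ l ∈ Finset.range K, ∑ i ∈ lev G r (l+1), phiF par d v (l+1) i
        ≤ ∑ l ∈ Finset.range K, (d:ℝ)^l * (v ⬝ᵥ (G.lapMatrix ℝ *ᵥ v)) :=
          Finset.sum_le_sum hterm
      _ = (∑ t ∈ Finset.range K, (d:ℝ)^t) * (v ⬝ᵥ (G.lapMatrix ℝ *ᵥ v)) := by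
          rw [Finset.sum_mul]
  have hfrac : (0:ℝ) ≤ (d:ℝ)/((d:ℝ)-1) := by
    have : (100:ℝ) ≤ (d:ℝ) := by exact_mod_cast hd
    refine div_nonneg (by linarith) (by linarith)
  calc v ⬝ᵥ v ≤ ∑ i : V, (v i - v r)^2 := h0'
    _ ≤ ((d:ℝ)/((d:ℝ)-1)) * ∑ i : V, phiF par d v (G.dist r i) i := h1
    _ = ((d:ℝ)/((d:ℝ)-1)) * ∑ l ∈ Finset.range (K+1), ∑ i ∈ lev G r l,
          phiF par d v l i := by rw [h2]
    _ ≤ ((d:ℝ)/((d:ℝ)-1)) * ((∑ t ∈ Finset.range K, (d:ℝ)^t)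
          * (v ⬝ᵥ (G.lapMatrix ℝ *ᵥ v))) := mul_le_mul_of_nonneg_left h3 hfrac

end Par

section TestVec

variable {r x : V} {d K : ℕ} {lam : ℝ}
  (hcon : G.Connected)
  (hx : G.Adj r x)
  (hcardT : (univ.filter (fun i => G.dist x i + 1 = G.dist r i)).card
      = ∑ t ∈ Finset.range K, d ^ t)
  (hparity : ∀ i : V, G.dist x i + 1 = G.dist r i ∨ G.dist r i + 1 = G.dist x i)
  (hcross : ∀ {u v : V}, G.dist x u + 1 = G.dist r u →
      G.dist r v + 1 = G.dist x v → G.Adj u v → u = x ∧ v = r)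
  (hmin1 : ∀ v : V → ℝ, (∑ i, v i) = 0 → lam * (v ⬝ᵥ v) ≤ v ⬝ᵥ (G.lapMatrix ℝ *ᵥ v))

include hcon hx hcardT hparity hcross hmin1

lemma lammin_ub :
    lam * (((∑ t ∈ Finset.range K, d ^ t : ℕ) : ℝ)
        * ((Fintype.card V : ℝ) - ((∑ t ∈ Finset.range K, d ^ t : ℕ) : ℝ))
        * (Fintype.card V : ℝ))
      ≤ (Fintype.card V : ℝ)^2 := by
  classical
  set T : Finset V := univ.filter (fun i => G.dist x i + 1 = G.dist r i) with hT
  set m : ℕ := ∑ t ∈ Finset.range K, d ^ t with hm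
  set n : ℕ := Fintype.card V with hn
  have hmn : m ≤ n := by
    rw [← hcardT, hn]
    exact Finset.card_le_univ T
  have hxT : x ∈ T := by
    rw [hT, Finset.mem_filter]
    refine ⟨Finset.mem_univ x, ?_⟩
    simp [SimpleGraph.dist_eq_one_iff_adj.2 hx]
  have hrT : r ∉ T := by
    rw [hT, Finset.mem_filter]
    rintro ⟨-, h⟩
    rw [SimpleGraph.dist_self] at h
    omega
  set w : V → ℝ := fun i => if i ∈ T then ((n:ℝ) - m) else -(m:ℝ) with hw
  have hsplitset : (univ : Finset V).filter (fun i => ¬ i ∈ T) = univ \ T := by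
    rw [Finset.sdiff_eq_filter]
  have hcardTc : (univ \ T).card = n - m := by
    rw [Finset.card_sdiff_of_subset (Finset.subset_univ T), hcardT, hn, Finset.card_univ]
  have hfT : (univ : Finset V).filter (fun i => i ∈ T) = T := by
    rw [Finset.filter_mem_eq_inter, Finset.univ_inter]
  have hsum : ∑ i, w i = 0 := by
    rw [hw]
    rw [Finset.sum_ite, hfT, hsplitset, Finset.sum_const, Finset.sum_const,
      hcardT, hcardTc, nsmul_eq_mul, nsmul_eq_mul, Nat.cast_sub hmn]
    ring
  have hww : w ⬝ᵥ w = (m:ℝ) * ((n:ℝ) - m) * n := by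
    have h1 : w ⬝ᵥ w = ∑ i : V, (w i)^2 := by simp [dotProduct, sq]
    rw [h1, hw]
    have h2 : ∀ i : V, ((fun i => if i ∈ T then ((n:ℝ) - m) else -(m:ℝ)) i)^2
        = if i ∈ T then ((n:ℝ) - m)^2 else (m:ℝ)^2 := by
      intro i
      by_cases hi : i ∈ T <;> simp [hi] <;> ring
    rw [Finset.sum_congr rfl fun i _ => h2 i]
    rw [Finset.sum_ite, hfT, hsplitset, Finset.sum_const, Finset.sum_const,
      hcardT, hcardTc, nsmul_eq_mul, nsmul_eq_mul, Nat.cast_sub hmn]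
    ring
  have hxnr : x ≠ r := (G.ne_of_adj hx).symm
  have hQ : w ⬝ᵥ (G.lapMatrix ℝ *ᵥ w) = (n:ℝ)^2 := by
    rw [lap_form]
    have hpt : ∀ i j : V, (if G.Adj i j then (w i - w j)^2 else 0)
        = (if i = x ∧ j = r then ((n:ℝ))^2 else 0)
          + (if i = r ∧ j = x then ((n:ℝ))^2 else 0) := by
      intro i j
      by_cases hadj : G.Adj i j
      · by_cases hi : i ∈ T <;> by_cases hj : j ∈ T
        · have hij : w i = w j := by simp [hw, hi, hj]
          have hnx : ¬(i = x ∧ j = r) := fun ⟨_, h2⟩ => hrT (h2 ▸ hj)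
          have hnr : ¬(i = r ∧ j = x) := fun ⟨h1, _⟩ => hrT (h1 ▸ hi)
          simp [hadj, hij, hnx, hnr]
        · have hiT : G.dist x i + 1 = G.dist r i := by
            have := Finset.mem_filter.1 (hT ▸ hi); exact this.2
          have hjT : G.dist r j + 1 = G.dist x j := by
            rcases hparity j with h | h
            · exact absurd (by rw [hT, Finset.mem_filter]; exact ⟨Finset.mem_univ j, h⟩) hj
            · exact h
          obtain ⟨hix, hjr⟩ := hcross hiT hjT hadj
          have e1 : w i = (n:ℝ) - m := by simp only [hw]; rw [if_pos hi]
          have e2 : w j = -(m:ℝ) := by simp only [hw]; rw [if_neg hj]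
          have hni : ¬(i = r ∧ j = x) := by
            rintro ⟨h1', -⟩
            exact hxnr (hix.symm.trans h1')
          rw [if_pos hadj, if_pos ⟨hix, hjr⟩, if_neg hni, e1, e2]
          push_cast
          ring
        · have hjT : G.dist x j + 1 = G.dist r j := by
            have := Finset.mem_filter.1 (hT ▸ hj); exact this.2
          have hiT : G.dist r i + 1 = G.dist x i := by
            rcases hparity i with h | h
            · exact absurd (by rw [hT, Finset.mem_filter]; exact ⟨Finset.mem_univ i, h⟩) hi
            · exact h
          obtain ⟨hjx, hir⟩ := hcross hjT hiT hadj.symm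
          have e1 : w j = (n:ℝ) - m := by simp only [hw]; rw [if_pos hj]
          have e2 : w i = -(m:ℝ) := by simp only [hw]; rw [if_neg hi]
          have hni : ¬(i = x ∧ j = r) := by
            rintro ⟨h1', -⟩
            exact hxnr (h1'.symm.trans hir)
          rw [if_pos hadj, if_neg hni, if_pos ⟨hir, hjx⟩, e1, e2]
          push_cast
          ring
        · have hij : w i = w j := by simp [hw, hi, hj]
          have hnx : ¬(i = x ∧ j = r) := fun ⟨h1, _⟩ => hi (h1 ▸ hxT)
          have hnr : ¬(i = r ∧ j = x) := fun ⟨_, h2⟩ => hj (h2 ▸ hxT)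
          simp [hadj, hij, hnx, hnr]
      · have hnx : ¬(i = x ∧ j = r) := by
          rintro ⟨rfl, rfl⟩; exact hadj hx.symm
        have hnr : ¬(i = r ∧ j = x) := by
          rintro ⟨rfl, rfl⟩; exact hadj hx
        simp [hadj, hnx, hnr]
    rw [Finset.sum_congr rfl fun i _ => Finset.sum_congr rfl fun j _ => hpt i j]
    have hs1 : ∑ i : V, ∑ j : V, (if i = x ∧ j = r then ((n:ℝ))^2 else 0) = (n:ℝ)^2 := by
      simp [ite_and]
    have hs2 : ∑ i : V, ∑ j : V, (if i = r ∧ j = x then ((n:ℝ))^2 else 0) = (n:ℝ)^2 := by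
      simp [ite_and]
    simp only [Finset.sum_add_distrib]
    rw [hs1, hs2]
    ring
  have := hmin1 w hsum
  rw [hww, hQ] at this
  exact this

end TestVec

end Aux

/-- There exists `d₁ ∈ ℕ` such that for all `d ≥ d₁` and `k ≥ 2`, the
condition number `χ(B_{d,k}) = λ_max(L(B_{d,k}))/λ_min⁺(L(B_{d,k}))` of the Bethe tree
satisfies `n/2 ≤ χ(B_{d,k}) ≤ 2n`, where `n = (d^k − 1)/(d − 1)` is its number of
vertices. -/
theorem bethe_tree_condition_number :
    ∃ d₁ : ℕ, ∀ d k : ℕ, d₁ ≤ d → 2 ≤ k →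
      ∀ (V : Type) [Fintype V] (G : SimpleGraph V), IsBetheTree d k G →
        ∀ lammax lammin : ℝ,
          IsMaxEigenvalue (G.lapMatrix ℝ) lammax →
          IsMinPosEigenvalue (G.lapMatrix ℝ) lammin →
          (Fintype.card V : ℝ) / 2 ≤ lammax / lammin ∧
            lammax / lammin ≤ 2 * (Fintype.card V : ℝ) := by
  refine ⟨100, ?_⟩
  intro d k hd hk V _ G hB lammax lammin hmax hmin
  obtain ⟨hT, r, hdist, hdegr, hdegi, hdegl⟩ := hB
  set K : ℕ := k - 1 with hKdef
  have hK : 1 ≤ K := by omega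
  -- the parent function
  have hparex : ∀ i : V, i ≠ r → ∃ p, G.Adj p i ∧ G.dist r p + 1 = G.dist r i := by
    intro i hi
    exact tree_exists_parent hT (hT.isConnected.pos_dist_of_ne (Ne.symm hi))
  obtain ⟨par, hpar⟩ : ∃ par : V → V, ∀ i, i ≠ r →
      G.Adj (par i) i ∧ G.dist r (par i) + 1 = G.dist r i := by
    refine ⟨fun i => if h : i = r then r else Classical.choose (hparex i h), fun i hi => ?_⟩
    simp only [dif_neg hi]
    exact Classical.choose_spec (hparex i hi)
  -- a child x of the root
  obtain ⟨x, hx0⟩ : (G.neighborFinset r).Nonempty := by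
    rw [← Finset.card_pos, SimpleGraph.card_neighborFinset_eq_degree, hdegr]
    omega
  have hx : G.Adj r x := by rwa [SimpleGraph.mem_neighborFinset] at hx0
  have hcard : ∀ u : V, ((childs G r u).card : ℝ) ≤ (d : ℝ) := by
    intro u
    exact_mod_cast card_childs_le hT hpar hd hK hdist hdegr hdegi hdegl u
  -- numeric data
  set m : ℕ := ∑ t ∈ Finset.range K, d ^ t with hm
  have hm1 : 1 ≤ m := by
    rw [hm]
    calc 1 = d ^ 0 := by rw [pow_zero]
      _ ≤ ∑ t ∈ Finset.range K, d ^ t :=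
        Finset.single_le_sum (fun i _ => Nat.zero_le _) (Finset.mem_range.2 (by omega))
  have hnm : Fintype.card V = m * d + 1 := by
    rw [card_V_eq hT hpar hd hK hdist hdegr hdegi hdegl,
      Finset.sum_range_succ' (fun l => d ^ l) K]
    simp only [pow_succ, pow_zero]
    rw [← Finset.sum_mul, hm]
  set nR : ℝ := (Fintype.card V : ℝ) with hnRdef
  set mR : ℝ := (m : ℝ) with hmRdef
  set dR : ℝ := (d : ℝ) with hdRdef
  have hdR : (100:ℝ) ≤ dR := by rw [hdRdef]; exact_mod_cast hd
  have hmR : (1:ℝ) ≤ mR := by rw [hmRdef]; exact_mod_cast hm1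
  have hnR : nR = mR * dR + 1 := by
    rw [hnRdef, hmRdef, hdRdef, hnm]; push_cast; ring
  have hcastm : (∑ t ∈ Finset.range K, (dR)^t) = mR := by
    rw [hmRdef, hm, hdRdef]; push_cast; rfl
  -- eigenvalue bounds
  have A1 : dR + 1 ≤ lammax := lammax_ge hT hpar hdegr hmax.1 (by omega)
  have A2 : lammax ≤ (11 * dR + 110) / 10 := by
    obtain ⟨u, hu1, hu2⟩ := hmax.2
    have h := Q_le hT hpar hcard u
    rw [hu1, hu2, mul_one] at h
    exact h
  have A3 : dR - 1 ≤ dR * (mR * lammin) := by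
    obtain ⟨wv, hw0, hw1, hw2⟩ := hmin.2
    have hp := poincare hT hpar hd hK hdist hcard wv hw0
    rw [hw1, hw2, hcastm] at hp
    have hd1pos : (0:ℝ) < dR - 1 := by linarith
    have h9 : (dR - 1) * ((dR/(dR-1)) * (mR * lammin)) = dR * (mR * lammin) := by
      field_simp
    calc dR - 1 = (dR - 1) * 1 := by ring
      _ ≤ (dR - 1) * ((dR/(dR-1)) * (mR * lammin)) :=
        mul_le_mul_of_nonneg_left hp (by linarith)
      _ = dR * (mR * lammin) := h9
  have A4 : lammin * (mR * (nR - mR) * nR) ≤ nR^2 := by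
    have h := lammin_ub hT.isConnected hx
      (card_T hT hpar hd hK hdist hdegr hdegi hdegl hx)
      (parity_x hT hpar hd hK hdist hdegr hdegi hdegl hx)
      (fun {u v} h1 h2 h3 => crossing hT hpar hd hK hdist hdegr hdegi hdegl hx h1 h2 h3)
      hmin.1
    rw [← hm] at h
    exact h
  have hlammin_pos : 0 < lammin := by
    nlinarith [A3, hdR, hmR, mul_pos (show (0:ℝ) < dR by linarith)
      (show (0:ℝ) < mR by linarith)]
  have hnmR : nR - mR = mR * (dR - 1) + 1 := by rw [hnR]; ring
  have hnR_pos : (0:ℝ) < nR := by nlinarith [hnR, hmR, hdR]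
  have heqm : mR * (nR - mR) = mR*mR*(dR-1) + mR := by rw [hnmR]; ring
  have h99 : (0:ℝ) ≤ (mR*mR - 1)*(dR - 1) := by
    have hm2 : (1:ℝ) ≤ mR * mR := by nlinarith [hmR]
    exact mul_nonneg (by linarith) (by linarith)
  have hmnR_pos : (0:ℝ) < mR * (nR - mR) := by nlinarith [heqm, h99, hmR, hdR]
  have hm2 : (1:ℝ) ≤ mR * mR := by nlinarith [hmR]
  constructor
  · rw [hnRdef] at *
    rw [le_div_iff₀ hlammin_pos]
    have P1 : nR^2 ≤ 2*(dR+1)*(mR*(nR-mR)) := by nlinarith [hnR, hmR, hdR, hm2, hnmR]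
    have key1 : nR * lammin ≤ 2*(dR+1) := by
      nlinarith [A4, P1, hmnR_pos, hnR_pos, hlammin_pos]
    linarith [key1, A1]
  · rw [hnRdef] at *
    rw [div_le_iff₀ hlammin_pos]
    have hdm_pos : (0:ℝ) < dR * mR := by nlinarith [hdR, hmR]
    have P2 : ((11*dR+110)/10)*(dR*mR) ≤ 2*nR*(dR-1) := by
      have h1 : (0:ℝ) ≤ dR*mR*(9*dR-130) := by nlinarith [hdm_pos, hdR]
      nlinarith [hnR, hmR, hdR, h1]
    have h5 : lammax*(dR*mR) ≤ ((11*dR+110)/10)*(dR*mR) :=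
      mul_le_mul_of_nonneg_right A2 (le_of_lt hdm_pos)
    have h6 : 2*nR*(dR-1) ≤ 2*nR*(dR*(mR*lammin)) :=
      mul_le_mul_of_nonneg_left A3 (by nlinarith [hnR_pos])
    have final : lammax*(dR*mR) ≤ (2*nR*lammin)*(dR*mR) := by nlinarith [h5, P2, h6]
    exact le_of_mul_le_mul_right final hdm_pos
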